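/- Let Δ° ⊂ ℝ^5 be the convex hull of the columns of the matrix with rows (1,0,0,0,0,-1), (0,1,0,0,0,-1), (0,0,1,0,0,-6), (0,0,0,1,0,-9), (0,0,0,0,1,-18). Then Δ° is a reflexive polytope whose polar dual Δ contains the six points given as columns of the matrix with rows (35,-1,-1,-1,-1,-1), (-1,35,-1,-1,-1,-1), (-1,-1,-1,-1,5,-1), (-1,-1,3,-1,-1,-1), (-1,-1,-1,1,-1,-1) as vertices. -/

import Mathlib

private lemma cons_val_five' {α : Type*} {m : ℕ} (x : α)
    (u : Fin m.succ.succ.succ.succ.succ → α) :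
    Matrix.vecCons x u 5 =
      Matrix.vecHead (Matrix.vecTail (Matrix.vecTail (Matrix.vecTail (Matrix.vecTail u)))) :=
  rfl

private def Vset : Set (Fin 5 → ℝ) :=
  {![1,0,0,0,0], ![0,1,0,0,0], ![0,0,1,0,0], ![0,0,0,1,0], ![0,0,0,0,1],
    ![-1,-1,-6,-9,-18]}

private def Wset : Set (Fin 5 → ℝ) :=
  {![35,-1,-1,-1,-1], ![-1,35,-1,-1,-1], ![-1,-1,5,-1,-1], ![-1,-1,-1,3,-1],
    ![-1,-1,-1,-1,1], ![-1,-1,-1,-1,-1]}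

private def Wfam : Fin 6 → (Fin 5 → ℝ) :=
  ![![35,-1,-1,-1,-1], ![-1,35,-1,-1,-1], ![-1,-1,5,-1,-1], ![-1,-1,-1,3,-1],
    ![-1,-1,-1,-1,1], ![-1,-1,-1,-1,-1]]

private def Vfam : Fin 6 → (Fin 5 → ℝ) :=
  ![![1,0,0,0,0], ![0,1,0,0,0], ![0,0,1,0,0], ![0,0,0,1,0], ![0,0,0,0,1],
    ![-1,-1,-6,-9,-18]]

private lemma dual_desc (m : Fin 5 → ℝ) :
    (∀ x ∈ convexHull ℝ Vset, -1 ≤ ∑ i, m i * x i) ↔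
    (-1 ≤ m 0 ∧ -1 ≤ m 1 ∧ -1 ≤ m 2 ∧ -1 ≤ m 3 ∧ -1 ≤ m 4 ∧
      m 0 + m 1 + 6*m 2 + 9*m 3 + 18*m 4 ≤ 1) := by
  constructor
  · intro H
    have h1 := H ![1,0,0,0,0] (subset_convexHull _ _ (by simp [Vset]))
    have h2 := H ![0,1,0,0,0] (subset_convexHull _ _ (by simp [Vset]))
    have h3 := H ![0,0,1,0,0] (subset_convexHull _ _ (by simp [Vset]))
    have h4 := H ![0,0,0,1,0] (subset_convexHull _ _ (by simp [Vset]))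
    have h5 := H ![0,0,0,0,1] (subset_convexHull _ _ (by simp [Vset]))
    have h6 := H ![-1,-1,-6,-9,-18] (subset_convexHull _ _ (by simp [Vset]))
    simp [Fin.sum_univ_five] at h1 h2 h3 h4 h5 h6
    refine ⟨h1, h2, by linarith, by linarith, by linarith, by linarith⟩
  · rintro ⟨h1, h2, h3, h4, h5, h6⟩ x hx
    have hconv : Convex ℝ {x : Fin 5 → ℝ | -1 ≤ ∑ i, m i * x i} := by
      apply convex_halfSpace_ge
      constructor
      · intro a b; simp [mul_add, Finset.sum_add_distrib]
      · intro c a; simp [Finset.mul_sum, smul_eq_mul]; ring_nf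
        exact Finset.sum_congr rfl fun i _ => by ring
    have hsub : Vset ⊆ {x : Fin 5 → ℝ | -1 ≤ ∑ i, m i * x i} := by
      rintro x (rfl | rfl | rfl | rfl | rfl | rfl) <;>
        · simp only [Set.mem_setOf_eq, Fin.sum_univ_five]; norm_num [Matrix.cons_val_two, Matrix.cons_val_three, Matrix.cons_val_four]; linarith
    exact convexHull_min hsub hconv hx

private lemma desc_eq_hull :
    {m : Fin 5 → ℝ | -1 ≤ m 0 ∧ -1 ≤ m 1 ∧ -1 ≤ m 2 ∧ -1 ≤ m 3 ∧ -1 ≤ m 4 ∧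
      m 0 + m 1 + 6*m 2 + 9*m 3 + 18*m 4 ≤ 1} = convexHull ℝ Wset := by
  apply Set.Subset.antisymm
  · rintro m ⟨h1, h2, h3, h4, h5, h6⟩
    set μ : Fin 6 → ℝ :=
      ![(m 0 + 1)/36, (m 1 + 1)/36, (m 2 + 1)/6, (m 3 + 1)/4, (m 4 + 1)/2,
        (1 - (m 0 + m 1 + 6*m 2 + 9*m 3 + 18*m 4))/36] with hμ
    have hmem : ∀ i : Fin 6, Wfam i ∈ convexHull ℝ Wset := by
      intro i
      apply subset_convexHull
      fin_cases i <;> simp [Wfam, Wset, cons_val_five']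
    have h0 : ∀ i ∈ Finset.univ, (0:ℝ) ≤ μ i := by
      intro i _; fin_cases i <;> simp [hμ, cons_val_five'] <;> linarith
    have hsum : ∑ i, μ i = 1 := by
      simp [hμ, cons_val_five', Matrix.vecHead, Matrix.vecTail, Fin.sum_univ_six]; ring
    have hrep : m = ∑ i, μ i • Wfam i := by
      funext j
      fin_cases j <;>
        simp [hμ, Wfam, cons_val_five', Matrix.vecHead, Matrix.vecTail, Fin.sum_univ_six] <;> ring
    rw [hrep]
    exact (convex_convexHull ℝ Wset).sum_mem h0 hsum (fun i _ => hmem i)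
  · apply convexHull_min
    · rintro m (rfl | rfl | rfl | rfl | rfl | rfl) <;> norm_num [Matrix.cons_val_two, Matrix.cons_val_three, Matrix.cons_val_four]
    · rintro x ⟨x1,x2,x3,x4,x5,x6⟩ y ⟨y1,y2,y3,y4,y5,y6⟩ a b ha hb hab
      refine ⟨?_,?_,?_,?_,?_,?_⟩ <;>
        simp only [Pi.add_apply, Pi.smul_apply, smul_eq_mul] <;> nlinarith

private lemma zero_mem_interior :
    (0 : Fin 5 → ℝ) ∈ interior (convexHull ℝ Vset) := by
  rw [mem_interior]
  refine ⟨Metric.ball 0 (1/100), ?_, Metric.isOpen_ball, Metric.mem_ball_self (by norm_num [Matrix.cons_val_two, Matrix.cons_val_three, Matrix.cons_val_four])⟩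
  intro x hx
  rw [Metric.mem_ball, dist_zero_right] at hx
  have hb : ∀ i : Fin 5, |x i| < 1/100 := by
    intro i
    have := norm_le_pi_norm x i
    rw [Real.norm_eq_abs] at this
    linarith
  have b0 := abs_lt.1 (hb 0); have b1 := abs_lt.1 (hb 1); have b2 := abs_lt.1 (hb 2)
  have b3 := abs_lt.1 (hb 3); have b4 := abs_lt.1 (hb 4)
  set c : ℝ := (1 - (x 0 + x 1 + x 2 + x 3 + x 4))/36 with hc
  set ν : Fin 6 → ℝ :=
    ![x 0 + c, x 1 + c, x 2 + 6*c, x 3 + 9*c, x 4 + 18*c, c] with hν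
  have hmem : ∀ i : Fin 6, Vfam i ∈ convexHull ℝ Vset := by
    intro i
    apply subset_convexHull
    fin_cases i <;> simp [Vfam, Vset, cons_val_five']
  have h0 : ∀ i ∈ Finset.univ, (0:ℝ) ≤ ν i := by
    intro i _; fin_cases i <;> simp [hν, hc, cons_val_five'] <;> linarith
  have hsum : ∑ i, ν i = 1 := by
    simp [hν, hc, cons_val_five', Matrix.vecHead, Matrix.vecTail, Fin.sum_univ_six]; ring
  have hrep : x = ∑ i, ν i • Vfam i := by
    funext j
    fin_cases j <;>
      simp [hν, hc, Vfam, cons_val_five', Matrix.vecHead, Matrix.vecTail, Fin.sum_univ_six] <;> ring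
  rw [hrep]
  exact (convex_convexHull ℝ Vset).sum_mem h0 hsum (fun i _ => hmem i)

private lemma mem_extreme_of_linear (S : Set (Fin 5 → ℝ)) (c w : Fin 5 → ℝ)
    (hw : w ∈ S)
    (h : ∀ y ∈ S, (∑ i, c i * y i ≤ ∑ i, c i * w i) ∧
      (∑ i, c i * w i ≤ ∑ i, c i * y i → y = w)) :
    w ∈ S.extremePoints ℝ := by
  apply exposedPoints_subset_extremePoints
  refine ⟨hw, ∑ i, c i • (ContinuousLinearMap.proj (R := ℝ) (φ := fun _ : Fin 5 => ℝ) i),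
    fun y hy => ?_⟩
  have hev : ∀ z : Fin 5 → ℝ,
      (∑ i, c i • (ContinuousLinearMap.proj (R := ℝ) (φ := fun _ : Fin 5 => ℝ) i)) z
        = ∑ i, c i * z i := by
    intro z; simp [ContinuousLinearMap.sum_apply]
  rw [hev, hev]; exact h y hy

/-- The E₇-model polytope Δ° = conv(e₁,…,e₅,(-1,-1,-6,-9,-18)) ⊂ ℝ^5 is reflexive,
and its polar dual contains the six listed points as vertices (extreme points). -/
theorem e7_model_polytope_reflexive_and_dual_vertices :
    (0 : Fin 5 → ℝ) ∈ interior (convexHull ℝ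
        ({![1,0,0,0,0], ![0,1,0,0,0], ![0,0,1,0,0], ![0,0,0,1,0], ![0,0,0,0,1],
          ![-1,-1,-6,-9,-18]} : Set (Fin 5 → ℝ))) ∧
    (∃ T : Finset (Fin 5 → ℤ),
      {m : Fin 5 → ℝ |
        ∀ x ∈ convexHull ℝ
          ({![1,0,0,0,0], ![0,1,0,0,0], ![0,0,1,0,0], ![0,0,0,1,0], ![0,0,0,0,1],
            ![-1,-1,-6,-9,-18]} : Set (Fin 5 → ℝ)),
        -1 ≤ ∑ i, m i * x i} =
      convexHull ℝ ((fun v : Fin 5 → ℤ => fun i => (v i : ℝ)) '' (T : Set (Fin 5 → ℤ)))) ∧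
    (∀ w ∈ ({![35,-1,-1,-1,-1], ![-1,35,-1,-1,-1], ![-1,-1,-1,3,-1],
        ![-1,-1,-1,-1,1], ![-1,-1,5,-1,-1], ![-1,-1,-1,-1,-1]} : Set (Fin 5 → ℝ)),
      w ∈ Set.extremePoints ℝ
        {m : Fin 5 → ℝ |
          ∀ x ∈ convexHull ℝ
            ({![1,0,0,0,0], ![0,1,0,0,0], ![0,0,1,0,0], ![0,0,0,1,0], ![0,0,0,0,1],
              ![-1,-1,-6,-9,-18]} : Set (Fin 5 → ℝ)),
          -1 ≤ ∑ i, m i * x i}) := by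
  have key : {m : Fin 5 → ℝ | ∀ x ∈ convexHull ℝ Vset, -1 ≤ ∑ i, m i * x i} =
      {m : Fin 5 → ℝ | -1 ≤ m 0 ∧ -1 ≤ m 1 ∧ -1 ≤ m 2 ∧ -1 ≤ m 3 ∧ -1 ≤ m 4 ∧
        m 0 + m 1 + 6*m 2 + 9*m 3 + 18*m 4 ≤ 1} := Set.ext dual_desc
  refine ⟨zero_mem_interior, ?_, ?_⟩
  · refine ⟨({![35,-1,-1,-1,-1], ![-1,35,-1,-1,-1], ![-1,-1,5,-1,-1], ![-1,-1,-1,3,-1],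
        ![-1,-1,-1,-1,1], ![-1,-1,-1,-1,-1]} : Finset (Fin 5 → ℤ)), ?_⟩
    have himg : ((fun v : Fin 5 → ℤ => fun i => (v i : ℝ)) ''
        (({![35,-1,-1,-1,-1], ![-1,35,-1,-1,-1], ![-1,-1,5,-1,-1], ![-1,-1,-1,3,-1],
          ![-1,-1,-1,-1,1], ![-1,-1,-1,-1,-1]} : Finset (Fin 5 → ℤ)) : Set (Fin 5 → ℤ)))
        = Wset := by
      have c1 : (fun i => (((![35,-1,-1,-1,-1] : Fin 5 → ℤ)) i : ℝ)) = ![35,-1,-1,-1,-1] := by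
        funext i; fin_cases i <;> simp
      have c2 : (fun i => (((![-1,35,-1,-1,-1] : Fin 5 → ℤ)) i : ℝ)) = ![-1,35,-1,-1,-1] := by
        funext i; fin_cases i <;> simp
      have c3 : (fun i => (((![-1,-1,5,-1,-1] : Fin 5 → ℤ)) i : ℝ)) = ![-1,-1,5,-1,-1] := by
        funext i; fin_cases i <;> simp
      have c4 : (fun i => (((![-1,-1,-1,3,-1] : Fin 5 → ℤ)) i : ℝ)) = ![-1,-1,-1,3,-1] := by
        funext i; fin_cases i <;> simp
      have c5 : (fun i => (((![-1,-1,-1,-1,1] : Fin 5 → ℤ)) i : ℝ)) = ![-1,-1,-1,-1,1] := by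
        funext i; fin_cases i <;> simp
      have c6 : (fun i => (((![-1,-1,-1,-1,-1] : Fin 5 → ℤ)) i : ℝ)) = ![-1,-1,-1,-1,-1] := by
        funext i; fin_cases i <;> simp
      simp only [Finset.coe_insert, Finset.coe_singleton, Set.image_insert_eq,
        Set.image_singleton, c1, c2, c3, c4, c5, c6, Wset]
    rw [himg]
    calc {m : Fin 5 → ℝ | ∀ x ∈ convexHull ℝ Vset, -1 ≤ ∑ i, m i * x i}
        = _ := key
      _ = convexHull ℝ Wset := desc_eq_hull
  · have hmemS : ∀ w : Fin 5 → ℝ,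
        (-1 ≤ w 0 ∧ -1 ≤ w 1 ∧ -1 ≤ w 2 ∧ -1 ≤ w 3 ∧ -1 ≤ w 4 ∧
          w 0 + w 1 + 6*w 2 + 9*w 3 + 18*w 4 ≤ 1) →
        w ∈ {m : Fin 5 → ℝ | ∀ x ∈ convexHull ℝ Vset, -1 ≤ ∑ i, m i * x i} := by
      intro w hw; rw [key]; exact hw
    rintro w (rfl | rfl | rfl | rfl | rfl | rfl)
    · -- w = (35,-1,-1,-1,-1), c = (1,0,5,8,17)
      apply mem_extreme_of_linear _ ![1,0,5,8,17]
      · exact hmemS _ (by norm_num [Matrix.cons_val_two, Matrix.cons_val_three, Matrix.cons_val_four])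
      · intro y hy
        obtain ⟨h1,h2,h3,h4,h5,h6⟩ := (dual_desc y).1 hy
        simp only [Fin.sum_univ_five]
        norm_num [Matrix.cons_val_two, Matrix.cons_val_three, Matrix.cons_val_four]
        constructor
        · linarith
        · intro h; funext i; fin_cases i <;> simp <;> linarith
    · -- w = (-1,35,-1,-1,-1), c = (0,1,5,8,17)
      apply mem_extreme_of_linear _ ![0,1,5,8,17]
      · exact hmemS _ (by norm_num [Matrix.cons_val_two, Matrix.cons_val_three, Matrix.cons_val_four])
      · intro y hy
        obtain ⟨h1,h2,h3,h4,h5,h6⟩ := (dual_desc y).1 hy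
        simp only [Fin.sum_univ_five]
        norm_num [Matrix.cons_val_two, Matrix.cons_val_three, Matrix.cons_val_four]
        constructor
        · linarith
        · intro h; funext i; fin_cases i <;> simp <;> linarith
    · -- w = (-1,-1,-1,3,-1), c = (0,0,5,9,17)
      apply mem_extreme_of_linear _ ![0,0,5,9,17]
      · exact hmemS _ (by norm_num [Matrix.cons_val_two, Matrix.cons_val_three, Matrix.cons_val_four])
      · intro y hy
        obtain ⟨h1,h2,h3,h4,h5,h6⟩ := (dual_desc y).1 hy
        simp only [Fin.sum_univ_five]
        norm_num [Matrix.cons_val_two, Matrix.cons_val_three, Matrix.cons_val_four]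
        constructor
        · linarith
        · intro h; funext i; fin_cases i <;> simp <;> linarith
    · -- w = (-1,-1,-1,-1,1), c = (0,0,5,8,18)
      apply mem_extreme_of_linear _ ![0,0,5,8,18]
      · exact hmemS _ (by norm_num [Matrix.cons_val_two, Matrix.cons_val_three, Matrix.cons_val_four])
      · intro y hy
        obtain ⟨h1,h2,h3,h4,h5,h6⟩ := (dual_desc y).1 hy
        simp only [Fin.sum_univ_five]
        norm_num [Matrix.cons_val_two, Matrix.cons_val_three, Matrix.cons_val_four]
        constructor
        · linarith
        · intro h; funext i; fin_cases i <;> simp <;> linarith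
    · -- w = (-1,-1,5,-1,-1), c = (0,0,6,8,17)
      apply mem_extreme_of_linear _ ![0,0,6,8,17]
      · exact hmemS _ (by norm_num [Matrix.cons_val_two, Matrix.cons_val_three, Matrix.cons_val_four])
      · intro y hy
        obtain ⟨h1,h2,h3,h4,h5,h6⟩ := (dual_desc y).1 hy
        simp only [Fin.sum_univ_five]
        norm_num [Matrix.cons_val_two, Matrix.cons_val_three, Matrix.cons_val_four]
        constructor
        · linarith
        · intro h; funext i; fin_cases i <;> simp <;> linarith
    · -- w = (-1,-1,-1,-1,-1), c = (-1,-1,-1,-1,-1)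
      apply mem_extreme_of_linear _ ![-1,-1,-1,-1,-1]
      · exact hmemS _ (by norm_num [Matrix.cons_val_two, Matrix.cons_val_three, Matrix.cons_val_four])
      · intro y hy
        obtain ⟨h1,h2,h3,h4,h5,h6⟩ := (dual_desc y).1 hy
        simp only [Fin.sum_univ_five]
        norm_num [Matrix.cons_val_two, Matrix.cons_val_three, Matrix.cons_val_four]
        constructor
        · linarith
        · intro h; funext i; fin_cases i <;> simp <;> linarith
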